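/- Let N be a positive integer, let K be an integer with 1 ≤ K ≤ N^{1/3}, and let 2/3 < β < 1 and C > 0. Let μ : ℤ/Nℤ → ℂ satisfy |μ̂(k)| ≤ C·(min(k, N−k)·N)^{−β/2} for all 1 ≤ k ≤ N−1. Define μ₁ by μ̂₁(n) = (1 − n/(K+1))·μ̂(n) for 0 ≤ n ≤ K and μ̂₁(n) = 0 for K < n ≤ N−1, and let μ₃ = μ₁ − E(μ₁), where E(μ₁) = (1/N) ∑_{x=0}^{N−1} μ₁(x). Then there is a constant C′ depending only on C and β such that ∑_{n=0}^{N−1} |μ̂₃(n)|² ≤ C′·N^{(1−4β)/3}; consequently ‖μ₃‖_{L²(ℤ/Nℤ)} ≤ √(C′)·N^{(1−4β)/6}. -/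

import Mathlib

open Complex Real Finset

/-- Discrete Fourier coefficient of `f : ℤ/Nℤ → ℂ`, extended `N`-periodically in `k`. -/
noncomputable def zmodFourier (N : ℕ) (f : ZMod N → ℂ) (k : ℤ) : ℂ :=
  (N : ℂ)⁻¹ * ∑ n ∈ Finset.range N,
    f n * Complex.exp (-(2 * Real.pi * Complex.I * k * n) / N)

lemma geom_exp_sum (N : ℕ) (hN : 0 < N) (j : ℤ) (hj : ¬ ((N:ℤ) ∣ j)) :
    ∑ k ∈ Finset.range N, Complex.exp (-(2 * Real.pi * Complex.I * j) / N) ^ k = 0 := by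
  set z : ℂ := Complex.exp (-(2 * Real.pi * Complex.I * j) / N) with hz
  have hNne : (N:ℂ) ≠ 0 := Nat.cast_ne_zero.mpr hN.ne'
  have hzN : z ^ N = 1 := by
    rw [hz, ← Complex.exp_nat_mul]
    have h : (N:ℂ) * (-(2 * Real.pi * Complex.I * j) / N) = (-j : ℤ) * (2 * Real.pi * Complex.I) := by
      push_cast
      field_simp
    rw [h, Complex.exp_int_mul_two_pi_mul_I]
  have hπ : (2 * (Real.pi:ℂ) * Complex.I) ≠ 0 := by
    simp [Complex.I_ne_zero, Real.pi_ne_zero, Complex.ofReal_ne_zero]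
  have hz1 : z ≠ 1 := by
    intro h
    rw [hz, Complex.exp_eq_one_iff] at h
    obtain ⟨n, hn⟩ := h
    apply hj
    refine ⟨-n, ?_⟩
    have h2 : (2 * (Real.pi:ℂ) * Complex.I) * (-j) = (2 * (Real.pi:ℂ) * Complex.I) * (n * N) := by
      field_simp at hn
      linear_combination (2 * (Real.pi:ℂ) * Complex.I) * hn
    have h3 : (-j : ℂ) = (n:ℂ) * N := mul_left_cancel₀ hπ h2
    have : (j:ℂ) = (N:ℂ) * (-n) := by linear_combination -h3
    exact_mod_cast this
  rw [geom_sum_eq hz1, hzN]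
  simp

lemma term_pow (N : ℕ) (k n m : ℕ) :
    Complex.exp (-(2 * Real.pi * Complex.I * k * n) / N) *
      (starRingEnd ℂ) (Complex.exp (-(2 * Real.pi * Complex.I * k * m) / N)) =
    Complex.exp (-(2 * Real.pi * Complex.I * ((n:ℤ) - m)) / N) ^ k := by
  rw [← Complex.exp_conj, ← Complex.exp_nat_mul, ← Complex.exp_add]
  congr 1
  have : (starRingEnd ℂ) (-(2 * (Real.pi:ℂ) * Complex.I * k * m) / N) =
      (2 * (Real.pi:ℂ) * Complex.I * k * m) / N := by
    simp [map_div₀, Complex.conj_I, map_ofNat]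
  rw [this]
  push_cast
  ring

lemma orth (N : ℕ) (hN : 0 < N) (n m : ℕ) (hn : n < N) (hm : m < N) :
    ∑ k ∈ Finset.range N,
      Complex.exp (-(2 * Real.pi * Complex.I * k * n) / N) *
        (starRingEnd ℂ) (Complex.exp (-(2 * Real.pi * Complex.I * k * m) / N)) =
      if n = m then (N:ℂ) else 0 := by
  simp only [term_pow N]
  by_cases h : n = m
  · subst h
    simp
  · rw [if_neg h]
    have hg := geom_exp_sum N hN ((n:ℤ) - m) (by
      intro hdvd
      have h0 : (n:ℤ) - m = 0 := by
        apply Int.eq_zero_of_dvd_of_natAbs_lt_natAbs hdvd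
        omega
      omega)
    simp only [Int.cast_sub, Int.cast_natCast] at hg
    exact hg

lemma parseval_complex (N : ℕ) (hN : 0 < N) (f : ZMod N → ℂ) :
    ∑ k ∈ Finset.range N, zmodFourier N f k * (starRingEnd ℂ) (zmodFourier N f k)
      = (N:ℂ)⁻¹ * ∑ n ∈ Finset.range N, f n * (starRingEnd ℂ) (f n) := by
  have hNne : (N:ℂ) ≠ 0 := Nat.cast_ne_zero.mpr hN.ne'
  set E : ℕ → ℕ → ℂ := fun k n => Complex.exp (-(2 * Real.pi * Complex.I * k * n) / N) with hE
  have step1 : ∀ k : ℕ,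
      zmodFourier N f k * (starRingEnd ℂ) (zmodFourier N f k)
        = (N:ℂ)⁻¹ * (N:ℂ)⁻¹ * ∑ n ∈ Finset.range N, ∑ m ∈ Finset.range N,
            f n * (starRingEnd ℂ) (f m) * (E k n * (starRingEnd ℂ) (E k m)) := by
    intro k
    rw [zmodFourier, map_mul, map_inv₀, map_natCast, map_sum]
    rw [mul_mul_mul_comm, Finset.sum_mul_sum]
    congr 1
    refine Finset.sum_congr rfl fun n _ => Finset.sum_congr rfl fun m _ => ?_
    rw [map_mul, hE]
    push_cast
    ring
  calc ∑ k ∈ Finset.range N, zmodFourier N f k * (starRingEnd ℂ) (zmodFourier N f k)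
      = ∑ k ∈ Finset.range N, ((N:ℂ)⁻¹ * (N:ℂ)⁻¹ *
          ∑ n ∈ Finset.range N, ∑ m ∈ Finset.range N,
            f n * (starRingEnd ℂ) (f m) * (E k n * (starRingEnd ℂ) (E k m))) :=
        Finset.sum_congr rfl fun k _ => step1 k
    _ = (N:ℂ)⁻¹ * (N:ℂ)⁻¹ * ∑ n ∈ Finset.range N, ∑ m ∈ Finset.range N,
          f n * (starRingEnd ℂ) (f m) *
            ∑ k ∈ Finset.range N, E k n * (starRingEnd ℂ) (E k m) := by
        rw [← Finset.mul_sum, Finset.sum_comm]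
        congr 1
        refine Finset.sum_congr rfl fun n _ => ?_
        rw [Finset.sum_comm]
        refine Finset.sum_congr rfl fun m _ => ?_
        rw [Finset.mul_sum]
    _ = (N:ℂ)⁻¹ * (N:ℂ)⁻¹ * ∑ n ∈ Finset.range N,
          f n * (starRingEnd ℂ) (f n) * N := by
        congr 1
        refine Finset.sum_congr rfl fun n hn => ?_
        rw [show (∑ m ∈ Finset.range N, f n * (starRingEnd ℂ) (f m) *
              ∑ k ∈ Finset.range N, E k n * (starRingEnd ℂ) (E k m))
            = ∑ m ∈ Finset.range N, if n = m then f n * (starRingEnd ℂ) (f m) * N else 0 from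
          Finset.sum_congr rfl fun m hm => by
            rw [orth N hN n m (Finset.mem_range.mp hn) (Finset.mem_range.mp hm), mul_ite, mul_zero]]
        rw [Finset.sum_ite_eq (Finset.range N) n (fun m => f n * (starRingEnd ℂ) (f m) * N)]
        simp [hn]
    _ = (N:ℂ)⁻¹ * ∑ n ∈ Finset.range N, f n * (starRingEnd ℂ) (f n) := by
        rw [← Finset.sum_mul, mul_comm _ ((N:ℂ))]
        field_simp

lemma parseval_real (N : ℕ) (hN : 0 < N) (f : ZMod N → ℂ) :
    (N:ℝ)⁻¹ * ∑ n ∈ Finset.range N, ‖f n‖ ^ 2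
      = ∑ k ∈ Finset.range N, ‖zmodFourier N f k‖ ^ 2 := by
  have h := parseval_complex N hN f
  simp only [Complex.mul_conj] at h
  have h2 : (((∑ k ∈ Finset.range N, Complex.normSq (zmodFourier N f k) : ℝ)) : ℂ)
      = (((N:ℝ)⁻¹ * ∑ n ∈ Finset.range N, Complex.normSq (f n) : ℝ) : ℂ) := by
    push_cast
    exact h
  have h3 := Complex.ofReal_inj.mp h2
  simp only [Complex.sq_norm]
  linarith [h3]

lemma sum_rpow_le (β : ℝ) (hβ0 : 0 < β) (hβ1 : β < 1) (K : ℕ) :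
    ∑ n ∈ Finset.Icc 1 K, (n:ℝ) ^ (-β) ≤ (1-β)⁻¹ * (K:ℝ) ^ (1-β) := by
  have hp : 0 < 1 - β := by linarith
  have key : ∀ n : ℕ, 1 ≤ n →
      (1-β) * (n:ℝ)^(-β) ≤ (n:ℝ)^(1-β) - ((n:ℝ)-1)^(1-β) := by
    intro n hn
    have hx : (1:ℝ) ≤ n := by exact_mod_cast hn
    have hx0 : (0:ℝ) < n := by linarith
    have hs : -1 ≤ -(1/(n:ℝ)) := by
      rw [neg_le_neg_iff]
      exact div_le_one_of_le₀ hx (by linarith)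
    have hb := rpow_one_add_le_one_add_mul_self hs hp.le (by linarith)
    have h2 : ((n:ℝ) - 1) = (1 + -(1/(n:ℝ))) * n := by field_simp; ring
    have h3 : ((n:ℝ)-1)^(1-β) ≤ (n:ℝ)^(1-β) * (1 - (1-β)/n) := by
      calc ((n:ℝ)-1)^(1-β) = (1 + -(1/(n:ℝ)))^(1-β) * (n:ℝ)^(1-β) := by
            rw [← Real.mul_rpow (by nlinarith) hx0.le, ← h2]
        _ ≤ (1 + (1-β) * -(1/(n:ℝ))) * (n:ℝ)^(1-β) :=
            mul_le_mul_of_nonneg_right hb (Real.rpow_nonneg hx0.le _)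
        _ = (n:ℝ)^(1-β) * (1 - (1-β)/n) := by ring
    have h4 : (n:ℝ)^(1-β) / n = (n:ℝ)^(-β) := by
      rw [show (-β) = (1-β) - 1 by ring, Real.rpow_sub hx0 (1-β) 1, Real.rpow_one]
    have h5 : (n:ℝ)^(1-β) * (1 - (1-β)/n) = (n:ℝ)^(1-β) - (1-β) * ((n:ℝ)^(1-β)/n) := by
      ring
    rw [h5, h4] at h3
    linarith
  have tele : ∑ n ∈ Finset.Icc 1 K, ((n:ℝ)^(1-β) - ((n:ℝ)-1)^(1-β)) = (K:ℝ)^(1-β) := by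
    have h0 : ((0:ℝ))^(1-β) = 0 := Real.zero_rpow hp.ne'
    have := Finset.sum_range_sub (fun i : ℕ => ((i:ℝ))^(1-β)) K
    rw [← Finset.Ico_add_one_right_eq_Icc, Finset.sum_Ico_eq_sum_range]
    rw [show ((K:ℝ))^(1-β) = (K:ℝ)^(1-β) - ((0:ℕ):ℝ)^(1-β) by push_cast; rw [h0]; ring, ← this]
    refine Finset.sum_congr (by norm_num) fun i _ => ?_
    push_cast
    ring_nf
  have hmain : (1-β) * ∑ n ∈ Finset.Icc 1 K, (n:ℝ)^(-β) ≤ (K:ℝ)^(1-β) := by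
    rw [Finset.mul_sum, ← tele]
    exact Finset.sum_le_sum fun n hn => key n (Finset.mem_Icc.mp hn).1
  calc ∑ n ∈ Finset.Icc 1 K, (n:ℝ)^(-β)
      = (1-β)⁻¹ * ((1-β) * ∑ n ∈ Finset.Icc 1 K, (n:ℝ)^(-β)) := by
        field_simp
    _ ≤ (1-β)⁻¹ * (K:ℝ)^(1-β) :=
        mul_le_mul_of_nonneg_left hmain (by positivity)

/-- Fourier coefficient of the constant function 1. -/
lemma zmodFourier_one (N : ℕ) (hN : 0 < N) (n : ℕ) (hn : n < N) :
    zmodFourier N (fun _ => (1:ℂ)) n = if n = 0 then 1 else 0 := by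
  have hNne : (N:ℂ) ≠ 0 := Nat.cast_ne_zero.mpr hN.ne'
  rw [zmodFourier]
  by_cases h : n = 0
  · subst h
    simp [Finset.sum_const, inv_mul_cancel₀ hNne]
  · rw [if_neg h]
    have hg := geom_exp_sum N hN (n:ℤ) (by
      intro hdvd
      have h0 : (n:ℤ) = 0 := by
        apply Int.eq_zero_of_dvd_of_natAbs_lt_natAbs hdvd
        omega
      omega)
    have : ∑ j ∈ Finset.range N,
        (fun _ : ZMod N => (1:ℂ)) j * Complex.exp (-(2 * Real.pi * Complex.I * ((n:ℤ):ℂ) * j) / N)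
        = ∑ j ∈ Finset.range N, Complex.exp (-(2 * Real.pi * Complex.I * ((n:ℤ):ℂ)) / N) ^ j := by
      refine Finset.sum_congr rfl fun j _ => ?_
      rw [one_mul, ← Complex.exp_nat_mul]
      congr 1
      push_cast
      ring
    rw [this, hg, mul_zero]

/-- `L²` bound on `μ₃ = μ₁ − E(μ₁)`: with `K ≤ N^{1/3}`, one has
`∑ |μ̂₃(n)|² ≤ C′ N^{(1−4β)/3}` and hence `‖μ₃‖_{L²} ≤ √C′ N^{(1−4β)/6}`,
with `C′` depending only on `C` and `β`. -/
theorem mu3_l2_bound (C β : ℝ) (hC : 0 < C) (hβ₁ : 2/3 < β) (hβ₂ : β < 1) :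
    ∃ C' : ℝ, 0 < C' ∧
      ∀ (N K : ℕ), 0 < N → 1 ≤ K → (K : ℝ) ≤ (N : ℝ) ^ ((1 : ℝ) / 3) →
      ∀ μ μ₁ : ZMod N → ℂ,
        (∀ k : ℕ, 1 ≤ k → k ≤ N - 1 →
          ‖zmodFourier N μ k‖ ≤
            C * ((min k (N - k) * N : ℕ) : ℝ) ^ (-β / 2)) →
        (∀ n : ℕ, n ≤ K →
          zmodFourier N μ₁ n = (1 - (n : ℂ) / (K + 1)) * zmodFourier N μ n) →
        (∀ n : ℕ, K < n → n ≤ N - 1 → zmodFourier N μ₁ n = 0) →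
        ∀ μ₃ : ZMod N → ℂ,
          (∀ x : ZMod N, μ₃ x = μ₁ x - (N : ℂ)⁻¹ * ∑ y ∈ Finset.range N, μ₁ y) →
          (∑ n ∈ Finset.range N, ‖zmodFourier N μ₃ n‖ ^ 2 ≤
              C' * (N : ℝ) ^ ((1 - 4 * β) / 3)) ∧
          Real.sqrt ((N : ℝ)⁻¹ * ∑ n ∈ Finset.range N, ‖μ₃ n‖ ^ 2) ≤
            Real.sqrt C' * (N : ℝ) ^ ((1 - 4 * β) / 6) := by
  have hβ0 : 0 < β := by linarith
  have hp : 0 < 1 - β := by linarith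
  refine ⟨C^2 * (1-β)⁻¹ + 1, by positivity, ?_⟩
  intro N K hN hK1 hKN μ μ₁ hμhat hμ₁a hμ₁b μ₃ hμ₃
  have hNne : (N:ℂ) ≠ 0 := Nat.cast_ne_zero.mpr hN.ne'
  have hNR : (0:ℝ) < N := by exact_mod_cast hN
  set c : ℂ := (N:ℂ)⁻¹ * ∑ y ∈ Finset.range N, μ₁ y with hc
  have hF3 : ∀ k : ℤ, zmodFourier N μ₃ k
      = zmodFourier N μ₁ k - c * zmodFourier N (fun _ => (1:ℂ)) k := by
    intro k
    have hsum : ∑ n ∈ Finset.range N, μ₃ (n : ZMod N) *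
          Complex.exp (-(2 * Real.pi * Complex.I * k * n) / N)
        = ∑ n ∈ Finset.range N, μ₁ (n : ZMod N) *
            Complex.exp (-(2 * Real.pi * Complex.I * k * n) / N)
          - c * ∑ n ∈ Finset.range N, (fun _ : ZMod N => (1:ℂ)) n *
            Complex.exp (-(2 * Real.pi * Complex.I * k * n) / N) := by
      rw [Finset.mul_sum, ← Finset.sum_sub_distrib]
      refine Finset.sum_congr rfl fun n _ => ?_
      rw [hμ₃ n]
      ring
    rw [zmodFourier, zmodFourier, zmodFourier, hsum]
    ring
  have hF10 : zmodFourier N μ₁ ((0:ℕ):ℤ) = c := by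
    rw [zmodFourier, hc]
    congr 1
    refine Finset.sum_congr rfl fun n _ => ?_
    norm_num
  have hF30 : zmodFourier N μ₃ ((0:ℕ):ℤ) = 0 := by
    rw [hF3, hF10, zmodFourier_one N hN 0 hN, if_pos rfl, mul_one, sub_self]
  have hF3n : ∀ n : ℕ, 1 ≤ n → n < N → zmodFourier N μ₃ (n:ℤ) = zmodFourier N μ₁ n := by
    intro n h1 h2
    rw [hF3, zmodFourier_one N hN n h2, if_neg (by omega), mul_zero, sub_zero]
  have hsplit : Finset.range N = insert 0 (Finset.Ico 1 N) := by
    ext x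
    simp only [Finset.mem_range, Finset.mem_insert, Finset.mem_Ico]
    omega
  have h0notin : (0:ℕ) ∉ Finset.Ico 1 N := by simp
  have hz : ‖zmodFourier N μ₃ ((0:ℕ):ℤ)‖ ^ 2 = 0 := by rw [hF30]; simp
  have hS : ∑ n ∈ Finset.range N, ‖zmodFourier N μ₃ n‖ ^ 2 ≤
      (C^2 * (1-β)⁻¹ + 1) * (N : ℝ) ^ ((1 - 4 * β) / 3) := by
    rcases Nat.lt_or_ge N 2 with hN2 | hN2
    · have hNeq : N = 1 := by omega
      subst hNeq
      rw [Finset.sum_range_one, hz]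
      positivity
    · have hK3 : K^3 ≤ N := by
        have h1 : ((K:ℝ))^(3:ℕ) ≤ ((N:ℝ)^((1:ℝ)/3))^(3:ℕ) :=
          pow_le_pow_left₀ (Nat.cast_nonneg K) hKN 3
        have h2 : ((N:ℝ)^((1:ℝ)/3))^(3:ℕ) = (N:ℝ) := by
          rw [← Real.rpow_natCast ((N:ℝ)^((1:ℝ)/3)) 3, ← Real.rpow_mul hNR.le]
          norm_num
        rw [h2] at h1
        exact_mod_cast (by push_cast; exact h1 : ((K^3:ℕ):ℝ) ≤ (N:ℝ))
      have h2K : 2*K ≤ N := by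
        rcases Nat.lt_or_ge K 2 with h | h
        · omega
        · have hKK : 2 ≤ K*K := by nlinarith
          calc 2*K ≤ (K*K)*K := Nat.mul_le_mul_right K hKK
            _ = K^3 := by ring
            _ ≤ N := hK3
      rw [hsplit, Finset.sum_insert h0notin, hz, zero_add]
      have heq : ∑ n ∈ Finset.Ico 1 N, ‖zmodFourier N μ₃ n‖ ^ 2
          = ∑ n ∈ Finset.Icc 1 K, ‖zmodFourier N μ₃ n‖ ^ 2 := by
        symm
        apply Finset.sum_subset
        · intro x hx
          simp only [Finset.mem_Icc] at hx
          simp only [Finset.mem_Ico]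
          omega
        · intro x hx hnx
          simp only [Finset.mem_Ico] at hx
          simp only [Finset.mem_Icc] at hnx
          rw [hF3n x hx.1 hx.2, hμ₁b x (by omega) (by omega)]
          simp
      rw [heq]
      have hterm : ∀ n ∈ Finset.Icc 1 K,
          ‖zmodFourier N μ₃ n‖ ^ 2 ≤ C^2 * ((n:ℝ)^(-β) * (N:ℝ)^(-β)) := by
        intro n hn
        rw [Finset.mem_Icc] at hn
        have hn1 : 1 ≤ n := hn.1
        have hnK : n ≤ K := hn.2
        have hnN : n < N := by omega
        have hminn : min n (N - n) = n := min_eq_left (by omega)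
        have habs : ‖zmodFourier N μ₃ (n:ℤ)‖ ≤ C * (((n * N : ℕ)):ℝ) ^ (-β/2) := by
          rw [hF3n n hn1 hnN, hμ₁a n hnK, norm_mul]
          have hb1 : ‖1 - (n:ℂ)/((K:ℂ)+1)‖ ≤ 1 := by
            have hre : ((1:ℂ) - (n:ℂ)/((K:ℂ)+1)) = (((1 - (n:ℝ)/((K:ℝ)+1)) : ℝ) : ℂ) := by
              push_cast; ring
            rw [hre, Complex.norm_real, Real.norm_eq_abs, abs_le]
            have hKpos : (0:ℝ) < (K:ℝ)+1 := by positivity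
            have h1 : (n:ℝ)/((K:ℝ)+1) ≤ 1 := by
              apply div_le_one_of_le₀ _ hKpos.le
              have : (n:ℝ) ≤ (K:ℝ) := by exact_mod_cast hnK
              linarith
            have h2 : 0 ≤ (n:ℝ)/((K:ℝ)+1) := by positivity
            constructor <;> linarith
          have hb2 := hμhat n hn1 (by omega)
          rw [hminn] at hb2
          calc ‖1 - (n:ℂ)/((K:ℂ)+1)‖ * ‖zmodFourier N μ n‖
              ≤ 1 * (C * (((n * N:ℕ)):ℝ) ^ (-β/2)) := by
                apply mul_le_mul hb1 hb2 (norm_nonneg _) zero_le_one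
            _ = C * (((n * N:ℕ)):ℝ) ^ (-β/2) := one_mul _
        have hx0 : (0:ℝ) < ((n*N : ℕ):ℝ) := by
          have : 0 < n*N := Nat.mul_pos (by omega) hN
          exact_mod_cast this
        calc ‖zmodFourier N μ₃ (n:ℤ)‖ ^ 2
            ≤ (C * (((n * N:ℕ)):ℝ) ^ (-β/2)) ^ 2 :=
              pow_le_pow_left₀ (norm_nonneg _) habs 2
          _ = C^2 * ((((n*N:ℕ)):ℝ) ^ (-β/2)) ^ 2 := by ring
          _ = C^2 * ((n:ℝ)^(-β) * (N:ℝ)^(-β)) := by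
              rw [← Real.rpow_natCast ((((n*N:ℕ)):ℝ) ^ (-β/2)) 2, ← Real.rpow_mul hx0.le]
              rw [show (-β/2 * ((2:ℕ):ℝ)) = -β by push_cast; ring]
              rw [show (((n*N:ℕ)):ℝ) = (n:ℝ) * (N:ℝ) by push_cast; ring]
              rw [Real.mul_rpow (Nat.cast_nonneg n) (Nat.cast_nonneg N)]
      calc ∑ n ∈ Finset.Icc 1 K, ‖zmodFourier N μ₃ n‖ ^ 2
          ≤ ∑ n ∈ Finset.Icc 1 K, C^2 * ((n:ℝ)^(-β) * (N:ℝ)^(-β)) :=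
            Finset.sum_le_sum hterm
        _ = C^2 * (N:ℝ)^(-β) * ∑ n ∈ Finset.Icc 1 K, (n:ℝ)^(-β) := by
            rw [Finset.mul_sum]
            exact Finset.sum_congr rfl fun n _ => by ring
        _ ≤ C^2 * (N:ℝ)^(-β) * ((1-β)⁻¹ * (K:ℝ)^(1-β)) := by
            apply mul_le_mul_of_nonneg_left (sum_rpow_le β hβ0 hβ₂ K) (by positivity)
        _ ≤ C^2 * (N:ℝ)^(-β) * ((1-β)⁻¹ * ((N:ℝ)^((1:ℝ)/3))^(1-β)) := by
            have hKr := Real.rpow_le_rpow (Nat.cast_nonneg K) hKN hp.le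
            apply mul_le_mul_of_nonneg_left _ (by positivity)
            apply mul_le_mul_of_nonneg_left hKr (by positivity)
        _ = (C^2 * (1-β)⁻¹) * ((N:ℝ)^(-β) * (N:ℝ)^((1:ℝ)/3 * (1-β))) := by
            rw [← Real.rpow_mul hNR.le]
            ring
        _ = (C^2 * (1-β)⁻¹) * (N:ℝ)^((1-4*β)/3) := by
            rw [← Real.rpow_add hNR]
            congr 1
            ring
        _ ≤ (C^2 * (1-β)⁻¹ + 1) * (N:ℝ)^((1-4*β)/3) := by
            apply mul_le_mul_of_nonneg_right (by linarith) (by positivity)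
  refine ⟨hS, ?_⟩
  rw [parseval_real N hN μ₃]
  have h1 : Real.sqrt (∑ n ∈ Finset.range N, ‖zmodFourier N μ₃ n‖^2)
      ≤ Real.sqrt ((C^2*(1-β)⁻¹+1) * (N:ℝ)^((1-4*β)/3)) := Real.sqrt_le_sqrt hS
  have hsq : (N:ℝ)^((1-4*β)/3) = ((N:ℝ)^((1-4*β)/6))^(2:ℕ) := by
    rw [← Real.rpow_natCast ((N:ℝ)^((1-4*β)/6)) 2, ← Real.rpow_mul hNR.le]
    congr 1
    push_cast
    ring
  rw [Real.sqrt_mul (by positivity) _, hsq, Real.sqrt_sq (Real.rpow_nonneg hNR.le _)] at h1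
  exact h1
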